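/- Under Assumptions (A1) and (A3), define for δ > 0 and t ≥ 0: 𝓡₁^δ(t) := Σ_{i=0}^{⌊t/δ⌋−1} ∫_{iδ}^{(i+1)δ} κ'(x(iδ))·f(x(iδ))·( ∫_s^{(i+1)δ} −(f'(x(u)) + κ'(x(u)))·E(u,t) du ) ds. Then for every integer p ≥ 1 there exists a constant C > 0, independent of t and δ, such that |𝓡₁^δ(t)|^p ≤ C·δ^p for all δ ∈ (0,1) and all t ≥ 0. -/

import Mathlib

/-- The sampling map `π_δ(t) = δ·⌊t/δ⌋`. -/
noncomputable def piD (δ t : ℝ) : ℝ := δ * (⌊t / δ⌋ : ℤ)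

set_option maxHeartbeats 1000000
open Set Filter MeasureTheory intervalIntegral

lemma aux_deriv_le' (f : ℝ → ℝ) (lam : ℝ) (hfd : Differentiable ℝ f)
    (hcontr : ∀ a b : ℝ, (a - b) * (f a - f b) ≤ -lam * (a - b) ^ 2) :
    ∀ y : ℝ, deriv f y ≤ -lam := by
  intro y
  have hd := (hfd y).hasDerivAt
  rw [hasDerivAt_iff_tendsto_slope] at hd
  refine le_of_tendsto hd ?_
  filter_upwards [self_mem_nhdsWithin] with z hz
  have hzy : z - y ≠ 0 := sub_ne_zero.2 hz
  have h1 := hcontr z y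
  have h2 : 0 < (z - y) ^ 2 := by positivity
  rw [slope_def_field]
  have key : (f z - f y) / (z - y) = (z - y) * (f z - f y) / (z - y) ^ 2 := by
    field_simp
  rw [key, div_le_iff₀ h2]
  linarith [hcontr z y]

lemma aux_abs_slope_deriv (f : ℝ → ℝ) (y : ℝ) (hfd : Differentiable ℝ f)
    (C : ℝ) (hb : ∀ z : ℝ, z ≠ y → |z - y| < 1 → |f z - f y| ≤ C * |z - y|) :
    |deriv f y| ≤ C := by
  have hd := (hfd y).hasDerivAt
  rw [hasDerivAt_iff_tendsto_slope] at hd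
  have habs : Filter.Tendsto (fun z => |slope f y z|) (nhdsWithin y {y}ᶜ) (nhds |deriv f y|) :=
    hd.abs
  refine le_of_tendsto habs ?_
  have hball : Metric.ball y 1 ∈ nhdsWithin y ({y}ᶜ : Set ℝ) :=
    nhdsWithin_le_nhds (Metric.ball_mem_nhds y one_pos)
  filter_upwards [self_mem_nhdsWithin, hball] with z hz hzb
  have hzy : z - y ≠ 0 := sub_ne_zero.2 hz
  rw [slope_def_field, abs_div]
  rw [div_le_iff₀ (abs_pos.2 hzy)]
  exact hb z hz (by simpa [Real.dist_eq] using hzb)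


lemma aux_reg (f κ : ℝ → ℝ) (x₀ : ℝ) (x : ℝ → ℝ)
    (hfc : Continuous f) (hκc : Continuous κ)
    (hx : ∀ t : ℝ, 0 ≤ t → x t = x₀ + ∫ s in (0:ℝ)..t, (f (x s) + κ (x s)))
    (T : ℝ) (hT : 0 ≤ T)
    (hI : IntervalIntegrable (fun s => f (x s) + κ (x s)) volume 0 T) :
    ContinuousOn x (Icc 0 T) ∧
      ∀ s ∈ Ioo 0 T, HasDerivAt x (f (x s) + κ (x s)) s := by
  set h : ℝ → ℝ := fun s => f (x s) + κ (x s) with hh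
  have huIcc : uIcc (0:ℝ) T = Icc 0 T := uIcc_of_le hT
  have hInt : IntegrableOn h (Icc 0 T) volume :=
    (intervalIntegrable_iff_integrableOn_Icc_of_le hT).1 hI
  have hprim : ContinuousOn (fun t => ∫ s in (0:ℝ)..t, h s) (Icc 0 T) := by
    have := intervalIntegral.continuousOn_primitive_interval (a := (0:ℝ)) (b := T)
      (f := h) (μ := volume) (by rwa [huIcc])
    rwa [huIcc] at this
  have hxcont : ContinuousOn x (Icc 0 T) := by
    have : ContinuousOn (fun t => x₀ + ∫ s in (0:ℝ)..t, h s) (Icc 0 T) :=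
      continuousOn_const.add hprim
    exact this.congr fun t ht => hx t ht.1
  refine ⟨hxcont, fun s hs => ?_⟩
  have hsIcc : Icc (0:ℝ) T ∈ nhds s := Icc_mem_nhds hs.1 hs.2
  have hhcont : ContinuousOn h (Icc 0 T) :=
    (hfc.comp_continuousOn hxcont).add (hκc.comp_continuousOn hxcont)
  have hca : ContinuousAt h s := hhcont.continuousAt hsIcc
  have hii : IntervalIntegrable h volume 0 s := by
    apply hI.mono_set
    rw [huIcc, uIcc_of_le hs.1.le]
    exact Icc_subset_Icc le_rfl hs.2.le
  have hmeas : StronglyMeasurableAtFilter h (nhds s) volume :=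
    ⟨Icc 0 T, hsIcc, hhcont.aestronglyMeasurable measurableSet_Icc⟩
  have hd : HasDerivAt (fun t => ∫ u in (0:ℝ)..t, h u) (h s) s :=
    intervalIntegral.integral_hasDerivAt_right hii hmeas hca
  have heq : (fun t => x₀ + ∫ u in (0:ℝ)..t, h u) =ᶠ[nhds s] x := by
    filter_upwards [Ioi_mem_nhds hs.1] with t ht
    exact (hx t (le_of_lt ht)).symm
  exact (hd.const_add x₀).congr_of_eventuallyEq heq.symm

lemma aux_key (f κ : ℝ → ℝ) (lam γ : ℝ)
    (hcontr : ∀ a b : ℝ, (a - b) * (f a - f b) ≤ -lam * (a - b) ^ 2)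
    (hκbd : ∀ a : ℝ, |κ a| ≤ γ) (y : ℝ) :
    y * (f y + κ y) ≤ |y| * ((|f 0| + γ) - lam * |y|) := by
  have h1 := hcontr y 0
  have h2 : y * f 0 ≤ |y| * |f 0| := by
    calc y * f 0 ≤ |y * f 0| := le_abs_self _
    _ = |y| * |f 0| := abs_mul _ _
  have h3 : y * κ y ≤ |y| * γ := by
    calc y * κ y ≤ |y * κ y| := le_abs_self _
    _ = |y| * |κ y| := abs_mul _ _
    _ ≤ |y| * γ := mul_le_mul_of_nonneg_left (hκbd y) (abs_nonneg y)
  have h5 : y * (f y + κ y) = (y - 0) * (f y - f 0) + y * f 0 + y * κ y := by ring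
  have h6 : -lam * (y - 0) ^ 2 = -lam * |y| ^ 2 := by rw [sub_zero, ← sq_abs]
  have h7 : |y| * ((|f 0| + γ) - lam * |y|) = |y| * |f 0| + |y| * γ - lam * |y| ^ 2 := by ring
  linarith [h1, h2, h3]

-- L2: Lyapunov bound
lemma aux_bound (f κ : ℝ → ℝ) (x₀ : ℝ) (x : ℝ → ℝ) (lam γ : ℝ)
    (hlam : 0 < lam)
    (hcontr : ∀ a b : ℝ, (a - b) * (f a - f b) ≤ -lam * (a - b) ^ 2)
    (hκbd : ∀ a : ℝ, |κ a| ≤ γ)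
    (hx0 : x 0 = x₀)
    (T : ℝ) (hT : 0 ≤ T)
    (hxcont : ContinuousOn x (Icc 0 T))
    (hder : ∀ s ∈ Ioo 0 T, HasDerivAt x (f (x s) + κ (x s)) s) :
    ∀ t ∈ Icc 0 T, |x t| ≤ max |x₀| ((|f 0| + γ) / lam) := by
  set c : ℝ := |f 0| + γ with hc
  set B : ℝ := max |x₀| (c / lam) with hB
  have hBx0 : |x₀| ≤ B := le_max_left _ _
  have hB0 : 0 ≤ B := le_trans (abs_nonneg _) hBx0
  have hBc : c / lam ≤ B := le_max_right _ _
  intro t ht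
  by_contra hgt
  push_neg at hgt
  set u : ℝ → ℝ := fun r => (x r) ^ 2 with hu
  have hucont : ContinuousOn u (Icc 0 T) := hxcont.pow 2
  have hut : B ^ 2 < u t := by
    calc B ^ 2 < |x t| ^ 2 := by
          apply pow_lt_pow_left₀ hgt hB0
          norm_num
    _ = u t := sq_abs _
  set K : Set ℝ := Icc 0 t ∩ u ⁻¹' (Iic (B ^ 2)) with hK
  have hKne : K.Nonempty := by
    refine ⟨0, ⟨le_rfl, ht.1⟩, ?_⟩
    simp only [mem_preimage, mem_Iic, hu, hx0]
    calc x₀ ^ 2 = |x₀| ^ 2 := (sq_abs _).symm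
    _ ≤ B ^ 2 := pow_le_pow_left₀ (abs_nonneg _) hBx0 2
  have hsubT : Icc (0:ℝ) t ⊆ Icc 0 T := Icc_subset_Icc le_rfl ht.2
  have hKclosed : IsClosed K :=
    (hucont.mono hsubT).preimage_isClosed_of_isClosed isClosed_Icc isClosed_Iic
  have hKcomp : IsCompact K :=
    isCompact_Icc.of_isClosed_subset hKclosed inter_subset_left
  set τ : ℝ := sSup K with hτ
  have hτK : τ ∈ K := hKcomp.sSup_mem hKne
  have hτIcc : τ ∈ Icc 0 t := hτK.1
  have hτlt : τ < t := by
    rcases lt_or_eq_of_le hτIcc.2 with h | h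
    · exact h
    · exfalso; have := hτK.2; rw [h] at this
      exact absurd this (not_le.2 hut)
  have hafter : ∀ r ∈ Ioc τ t, B ^ 2 < u r := by
    intro r hr
    by_contra hle
    push_neg at hle
    have hrK : r ∈ K := ⟨⟨le_trans hτIcc.1 hr.1.le, hr.2⟩, hle⟩
    exact absurd (le_csSup hKcomp.bddAbove hrK) (not_le.2 hr.1)
  have hanti : AntitoneOn u (Icc τ t) := by
    apply antitoneOn_of_deriv_nonpos (convex_Icc τ t)
    · exact hucont.mono (Icc_subset_Icc hτIcc.1 ht.2)
    · rw [interior_Icc]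
      intro r hr
      have hrT : r ∈ Ioo 0 T := ⟨lt_of_le_of_lt hτIcc.1 hr.1, lt_of_lt_of_le hr.2 ht.2⟩
      exact ((hder r hrT).pow 2).differentiableAt.differentiableWithinAt
    · rw [interior_Icc]
      intro r hr
      have hrT : r ∈ Ioo 0 T := ⟨lt_of_le_of_lt hτIcc.1 hr.1, lt_of_lt_of_le hr.2 ht.2⟩
      have hd : HasDerivAt u (2 * x r ^ 1 * (f (x r) + κ (x r))) r := (hder r hrT).pow 2
      have hdr : deriv u r = 2 * (x r * (f (x r) + κ (x r))) := by
        rw [hd.deriv]; ring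
      rw [hdr]
      have hur := hafter r ⟨hr.1, hr.2.le⟩
      have hxr : B ≤ |x r| := by
        by_contra hle
        push_neg at hle
        have : u r ≤ B ^ 2 := by
          calc u r = |x r| ^ 2 := (sq_abs _).symm
          _ ≤ B ^ 2 := pow_le_pow_left₀ (abs_nonneg _) hle.le 2
        linarith
      have hkey := aux_key f κ lam γ hcontr hκbd (x r)
      have hcB : c ≤ lam * |x r| := by
        have h1 : c / lam ≤ |x r| := le_trans hBc hxr
        calc c = lam * (c / lam) := by field_simp
        _ ≤ lam * |x r| := mul_le_mul_of_nonneg_left h1 hlam.le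
      have hnp : |x r| * ((|f 0| + γ) - lam * |x r|) ≤ 0 :=
        mul_nonpos_of_nonneg_of_nonpos (abs_nonneg _) (by linarith)
      linarith
  have hfin := hanti ⟨le_rfl, hτlt.le⟩ ⟨hτlt.le, le_rfl⟩ hτlt.le
  have huτ : u τ ≤ B ^ 2 := hτK.2
  linarith

section
variable (f κ : ℝ → ℝ) (x₀ : ℝ) (x : ℝ → ℝ) (lam ξ μ γ : ℝ) (q : ℕ)

-- bound |f y| for |y| ≤ B
lemma aux_fbd (hfLip : ∀ a b : ℝ, |f a - f b| ≤ (ξ * (|a| ^ q + |b| ^ q) + μ) * |a - b|)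
    (hξ : 0 ≤ ξ) (hμ : 0 ≤ μ) (B : ℝ) (y : ℝ) (hy : |y| ≤ B) :
    |f y| ≤ (ξ * (B ^ q + 1) + μ) * B + |f 0| := by
  have hB0 : 0 ≤ B := le_trans (abs_nonneg _) hy
  have h1 := hfLip y 0
  have h2 : |y| ^ q ≤ B ^ q := pow_le_pow_left₀ (abs_nonneg _) hy q
  have h3 : |(0:ℝ)| ^ q ≤ 1 := by
    rcases Nat.eq_zero_or_pos q with h | h
    · simp [h]
    · rw [abs_zero, zero_pow h.ne']; norm_num
  have h4 : |f y| ≤ |f y - f 0| + |f 0| := by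
    calc |f y| = |(f y - f 0) + f 0| := by ring_nf
    _ ≤ |f y - f 0| + |f 0| := abs_add_le _ _
  have h5 : (ξ * (|y| ^ q + |(0:ℝ)| ^ q) + μ) * |y - 0| ≤ (ξ * (B ^ q + 1) + μ) * B := by
    rw [sub_zero]
    apply mul_le_mul _ hy (abs_nonneg _) (by positivity)
    have h6 : 0 ≤ B ^ q + 1 := by positivity
    have : |y| ^ q + |(0:ℝ)| ^ q ≤ B ^ q + 1 := by linarith
    nlinarith
  simp only [sub_zero] at h1 h5
  linarith
end

-- L3 + L4 : full trajectory regularity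
lemma aux_traj (f κ : ℝ → ℝ) (x₀ : ℝ) (x : ℝ → ℝ) (lam ξ μ γ : ℝ) (q : ℕ)
    (hlam : 0 < lam) (hξ : 0 < ξ) (hμ : 0 < μ) (hγ : 0 < γ)
    (hcontr : ∀ a b : ℝ, (a - b) * (f a - f b) ≤ -lam * (a - b) ^ 2)
    (hfLip : ∀ a b : ℝ, |f a - f b| ≤ (ξ * (|a| ^ q + |b| ^ q) + μ) * |a - b|)
    (hκbd : ∀ a : ℝ, |κ a| ≤ γ)
    (hfc : Continuous f) (hκc : Continuous κ)
    (hx : ∀ t : ℝ, 0 ≤ t → x t = x₀ + ∫ s in (0:ℝ)..t, (f (x s) + κ (x s))) :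
    (∀ t : ℝ, 0 ≤ t → |x t| ≤ max |x₀| ((|f 0| + γ) / lam)) ∧
      ContinuousOn x (Ici 0) := by
  set h : ℝ → ℝ := fun s => f (x s) + κ (x s) with hh
  set B : ℝ := max |x₀| ((|f 0| + γ) / lam) with hB
  have hx0 : x 0 = x₀ := by
    have := hx 0 le_rfl
    simpa using this
  -- L3: global integrability
  have hglob : ∀ T : ℝ, 0 ≤ T → IntervalIntegrable h volume 0 T := by
    by_contra hcon
    push_neg at hcon
    obtain ⟨T₀, hT₀, hnint⟩ := hcon
    set Good : Set ℝ := {T : ℝ | 0 ≤ T ∧ IntervalIntegrable h volume 0 T} with hGood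
    have hmono : ∀ T ∈ Good, ∀ T' : ℝ, 0 ≤ T' → T' ≤ T → T' ∈ Good := by
      intro T hT T' hT'0 hT'T
      refine ⟨hT'0, hT.2.mono_set ?_⟩
      rw [uIcc_of_le hT'0, uIcc_of_le (le_trans hT'0 hT'T)]
      exact Icc_subset_Icc le_rfl hT'T
    have h0Good : (0:ℝ) ∈ Good := ⟨le_rfl, IntervalIntegrable.refl⟩
    have hne : Good.Nonempty := ⟨0, h0Good⟩
    have hbdd : BddAbove Good := by
      refine ⟨T₀, fun T hT => ?_⟩
      by_contra hlt
      push_neg at hlt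
      exact hnint (hmono T hT T₀ hT₀ hlt.le).2
    set τ : ℝ := sSup Good with hτ
    have hτ0 : 0 ≤ τ := le_csSup hbdd h0Good
    have hlt_good : ∀ t : ℝ, 0 ≤ t → t < τ → t ∈ Good := by
      intro t ht0 htτ
      obtain ⟨T, hTG, hTt⟩ := exists_lt_of_lt_csSup hne htτ
      exact hmono T hTG t ht0 hTt.le
    have hxconst : ∀ t : ℝ, τ < t → x t = x₀ := by
      intro t htτ
      have ht0 : 0 ≤ t := le_trans hτ0 htτ.le
      have : ¬ IntervalIntegrable h volume 0 t := by
        intro hcontra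
        exact absurd (le_csSup hbdd ⟨ht0, hcontra⟩) (not_le.2 htτ)
      rw [hx t ht0, intervalIntegral.integral_undef this, add_zero]
    -- |x t| ≤ B everywhere (under the contradiction hypothesis)
    have hxB : ∀ t : ℝ, 0 ≤ t → |x t| ≤ B := by
      intro t ht0
      by_cases hτG : IntervalIntegrable h volume 0 t
      · obtain ⟨hcont, hder⟩ := aux_reg f κ x₀ x hfc hκc hx t ht0 hτG
        exact aux_bound f κ x₀ x lam γ hlam hcontr hκbd hx0 t ht0
          hcont hder t ⟨ht0, le_rfl⟩
      · rw [hx t ht0, intervalIntegral.integral_undef hτG, add_zero]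
        exact le_max_left _ _
    -- h is bounded on [0,∞)
    set Mh : ℝ := (ξ * (B ^ q + 1) + μ) * B + |f 0| + γ with hMh
    have hhbd : ∀ t : ℝ, 0 ≤ t → |h t| ≤ Mh := by
      intro t ht0
      have h1 : |f (x t)| ≤ (ξ * (B ^ q + 1) + μ) * B + |f 0| :=
        aux_fbd f ξ μ q hfLip hξ.le hμ.le B (x t) (hxB t ht0)
      have h2 := hκbd (x t)
      calc |h t| ≤ |f (x t)| + |κ (x t)| := abs_add_le _ _
      _ ≤ Mh := by rw [hMh]; linarith
    -- continuity of x on [0, τ)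
    have hxcont_lt : ContinuousOn x (Ico 0 τ) := by
      intro s hs
      obtain ⟨T, hTG, hTs⟩ := exists_lt_of_lt_csSup hne hs.2
      obtain ⟨hcont, _⟩ := aux_reg f κ x₀ x hfc hκc hx T (le_trans hs.1 hTs.le) hTG.2
      have h1 : ContinuousWithinAt x (Icc 0 T) s := hcont s ⟨hs.1, hTs.le⟩
      apply h1.mono_of_mem_nhdsWithin
      apply Filter.mem_of_superset (inter_mem_nhdsWithin (Ico 0 τ) (Iio_mem_nhds hTs))
      rintro r ⟨hr1, hr2⟩
      exact ⟨hr1.1, le_of_lt hr2⟩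
    -- integrability on [0, T] for any T: contradiction
    apply hnint
    have hIcc : IntegrableOn h (Icc 0 T₀) volume := by
      have hsplit : Icc (0:ℝ) T₀ ⊆ (Icc 0 T₀ ∩ Iio τ) ∪ (Icc 0 T₀ ∩ Ici τ) := by
        intro r hr
        rcases lt_or_ge r τ with hc | hc
        · exact Or.inl ⟨hr, hc⟩
        · exact Or.inr ⟨hr, hc⟩
      apply IntegrableOn.mono_set _ hsplit
      apply IntegrableOn.union
      · -- part 1 : [0,T₀] ∩ (-∞, τ)
        have hmeas : MeasurableSet (Icc 0 T₀ ∩ Iio τ) :=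
          measurableSet_Icc.inter measurableSet_Iio
        have hsub : Icc 0 T₀ ∩ Iio τ ⊆ Ico 0 τ := fun r hr => ⟨hr.1.1, hr.2⟩
        have hhcont : ContinuousOn h (Ico 0 τ) :=
          (hfc.comp_continuousOn hxcont_lt).add (hκc.comp_continuousOn hxcont_lt)
        have hasm : AEStronglyMeasurable h (volume.restrict (Icc 0 T₀ ∩ Iio τ)) :=
          (hhcont.mono hsub).aestronglyMeasurable hmeas
        apply Integrable.mono' (g := fun _ => Mh)
          (integrableOn_const (((measure_mono (inter_subset_left)).trans_lt
            measure_Icc_lt_top).ne))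
          hasm
        · rw [ae_restrict_iff' hmeas]
          filter_upwards with r hr
          exact hhbd r hr.1.1
      · -- part 2 : [0,T₀] ∩ [τ, ∞) : h is a.e. constant there
        have hmeas : MeasurableSet (Icc 0 T₀ ∩ Ici τ) :=
          measurableSet_Icc.inter measurableSet_Ici
        have hae : h =ᵐ[volume.restrict (Icc 0 T₀ ∩ Ici τ)] fun _ => f x₀ + κ x₀ := by
          rw [Filter.EventuallyEq, ae_restrict_iff' hmeas]
          have hτnull : ∀ᵐ (r : ℝ), r ∉ ({τ} : Set ℝ) :=
            measure_eq_zero_iff_ae_notMem.1 (measure_singleton τ)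
          filter_upwards [hτnull] with r hr hrm
          have hrτ : τ < r := lt_of_le_of_ne hrm.2 fun e => hr (by simp [← e])
          show f (x r) + κ (x r) = f x₀ + κ x₀
          rw [hxconst r hrτ]
        apply (Integrable.congr _ hae.symm)
        exact integrableOn_const (((measure_mono (inter_subset_left)).trans_lt
          measure_Icc_lt_top).ne)
    exact (intervalIntegrable_iff_integrableOn_Icc_of_le hT₀).2 hIcc
  -- conclude
  constructor
  · intro t ht
    obtain ⟨hcont, hder⟩ := aux_reg f κ x₀ x hfc hκc hx t ht (hglob t ht)
    exact aux_bound f κ x₀ x lam γ hlam hcontr hκbd hx0 t ht hcont hder t ⟨ht, le_rfl⟩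
  · intro s hs
    have hs' : (0:ℝ) ≤ s := hs
    obtain ⟨hcont, _⟩ := aux_reg f κ x₀ x hfc hκc hx (s+1) (by linarith) (hglob (s+1) (by linarith))
    have h1 : ContinuousWithinAt x (Icc 0 (s+1)) s := hcont s ⟨hs', by linarith⟩
    apply h1.mono_of_mem_nhdsWithin
    apply Filter.mem_of_superset (inter_mem_nhdsWithin (Ici 0) (Iio_mem_nhds (by linarith : s < s+1)))
    rintro r ⟨hr1, hr2⟩
    exact ⟨hr1, le_of_lt hr2⟩



/-- Uniform-in-time bound `|𝓡₁^δ(t)|^p ≤ C·δ^p` for the Riemann-sum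
remainder `𝓡₁^δ(t) = Σᵢ ∫_{iδ}^{(i+1)δ} κ'(x(iδ))·f(x(iδ))·
(∫ₛ^{(i+1)δ} −(f'(x(u)) + κ'(x(u)))·E(u,t) du) ds`. -/
theorem stmt6
    (f κ : ℝ → ℝ) (x₀ : ℝ) (x : ℝ → ℝ)
    -- Assumption (A1)
    (lam ξ μ Lκ γ : ℝ) (q : ℕ)
    (hlam : 0 < lam) (hξ : 0 < ξ) (hμ : 0 < μ) (hLκ : 0 < Lκ) (hγ : 0 < γ)
    (hcontr : ∀ a b : ℝ, (a - b) * (f a - f b) ≤ -lam * (a - b) ^ 2)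
    (hfLip : ∀ a b : ℝ, |f a - f b| ≤ (ξ * (|a| ^ q + |b| ^ q) + μ) * |a - b|)
    (hκLip : ∀ a b : ℝ, |κ a - κ b| ≤ Lκ * |a - b|)
    (hgap : lam / 2 - Lκ > 0)
    (hκbd : ∀ a : ℝ, |κ a| ≤ γ)
    -- Assumption (A3)
    (hfd : Differentiable ℝ f) (hfd2 : Differentiable ℝ (deriv f))
    (hκd : Differentiable ℝ κ) (hκd2 : Differentiable ℝ (deriv κ))
    (K : ℝ) (hK : ∀ y : ℝ, |deriv (deriv κ) y| ≤ K)
    (cf : ℝ) (rf : ℕ) (hf2 : ∀ y : ℝ, |deriv (deriv f) y| ≤ cf * (1 + |y| ^ rf))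
    (Cstar : ℝ) (hCstar : 0 < Cstar)
    (hint : ∀ m : ℕ, (m = 1 ∨ m = 2) → ∀ t : ℝ, 0 ≤ t →
      (∫ s in (0:ℝ)..t,
        Real.exp ((m : ℝ) * ∫ u in s..t, (deriv f (x u) + deriv κ (x u)))) ≤ Cstar)
    -- the closed-loop ODE `dx/dt = f(x) + κ(x)`, `x(0) = x₀`
    (hx : ∀ t : ℝ, 0 ≤ t → x t = x₀ + ∫ s in (0:ℝ)..t, (f (x s) + κ (x s)))
    :
    ∀ p : ℕ, 1 ≤ p → ∃ C : ℝ, 0 < C ∧ ∀ δ : ℝ, 0 < δ → δ < 1 → ∀ t : ℝ, 0 ≤ t →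
      |∑ i ∈ Finset.range (⌊t / δ⌋).toNat,
          ∫ s in ((i : ℝ) * δ)..(((i : ℝ) + 1) * δ),
            deriv κ (x ((i : ℝ) * δ)) * f (x ((i : ℝ) * δ)) *
              ∫ u in s..(((i : ℝ) + 1) * δ),
                (-(deriv f (x u) + deriv κ (x u)) *
                  Real.exp (∫ r in u..t, (deriv f (x r) + deriv κ (x r))))| ^ p
        ≤ C * δ ^ p := by
  intro p hp
  obtain ⟨hxB, hxc⟩ := aux_traj f κ x₀ x lam ξ μ γ q hlam hξ hμ hγ hcontr hfLip hκbd
    hfd.continuous hκd.continuous hx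
  set B : ℝ := max |x₀| ((|f 0| + γ) / lam) with hB
  have hB0 : 0 ≤ B := le_trans (abs_nonneg _) (le_max_left _ _)
  -- derivative bounds
  have hdf_le : ∀ y : ℝ, deriv f y ≤ -lam := aux_deriv_le' f lam hfd hcontr
  have hdκ : ∀ y : ℝ, |deriv κ y| ≤ Lκ := by
    intro y
    exact aux_abs_slope_deriv κ y hκd Lκ (fun z _ _ => hκLip z y)
  have hdf_bd : ∀ y : ℝ, |deriv f y| ≤ ξ * ((|y| + 1) ^ q + |y| ^ q) + μ := by
    intro y
    apply aux_abs_slope_deriv f y hfd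
    intro z hz hz1
    refine le_trans (hfLip z y) ?_
    apply mul_le_mul_of_nonneg_right _ (abs_nonneg _)
    have h1 : |z| ≤ |y| + 1 := by
      have := abs_sub_abs_le_abs_sub z y
      linarith
    have h2 : |z| ^ q ≤ (|y| + 1) ^ q := pow_le_pow_left₀ (abs_nonneg _) h1 q
    nlinarith [hξ.le]
  -- constants
  set ν : ℝ := lam / 2 with hν
  have hν0 : 0 < ν := by rw [hν]; linarith
  set Mf' : ℝ := ξ * ((B + 1) ^ q + B ^ q) + μ with hMf'
  have hMf'0 : 0 < Mf' := by
    have : (0:ℝ) ≤ (B+1)^q := by positivity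
    have : (0:ℝ) ≤ B^q := by positivity
    rw [hMf']; nlinarith
  set M : ℝ := Mf' + Lκ with hM
  have hM0 : 0 < M := by rw [hM]; linarith
  set Mf : ℝ := (ξ * (B ^ q + 1) + μ) * B + |f 0| with hMfd
  have hMf0 : 0 ≤ Mf := by
    have h1 : (0:ℝ) ≤ ξ * (B ^ q + 1) + μ := by positivity
    have h3 := mul_nonneg h1 hB0
    rw [hMfd]; linarith [abs_nonneg (f 0)]
  set C₀ : ℝ := Lκ * Mf * M * Real.exp ν / ν + 1 with hC₀
  have hC₀1 : 1 ≤ C₀ := by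
    rw [hC₀]
    have : 0 ≤ Lκ * Mf * M * Real.exp ν / ν := by positivity
    linarith
  have hC₀0 : 0 < C₀ := lt_of_lt_of_le one_pos hC₀1
  refine ⟨C₀ ^ p, pow_pos hC₀0 p, ?_⟩
  intro δ hδ0 hδ1 t ht
  -- bounds on g u = deriv f (x u) + deriv κ (x u)
  have hgM : ∀ u : ℝ, 0 ≤ u → |deriv f (x u) + deriv κ (x u)| ≤ M := by
    intro u hu
    have h1 : |deriv f (x u)| ≤ Mf' := by
      refine le_trans (hdf_bd (x u)) ?_
      have hxu := hxB u hu
      have h2 : |x u| + 1 ≤ B + 1 := by linarith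
      have h3 : (|x u| + 1) ^ q ≤ (B+1) ^ q :=
        pow_le_pow_left₀ (by positivity) h2 q
      have h4 : |x u| ^ q ≤ B ^ q := pow_le_pow_left₀ (abs_nonneg _) hxu q
      rw [hMf']
      nlinarith [hξ.le]
    calc |deriv f (x u) + deriv κ (x u)| ≤ |deriv f (x u)| + |deriv κ (x u)| := abs_add_le _ _
    _ ≤ M := by rw [hM]; linarith [hdκ (x u)]
  have hgν : ∀ u : ℝ, deriv f (x u) + deriv κ (x u) ≤ -ν := by
    intro u
    have h1 := hdf_le (x u)
    have h2 := abs_le.1 (hdκ (x u))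
    rw [hν]; linarith [h2.2]
  have hgc : ContinuousOn (fun u => deriv f (x u) + deriv κ (x u)) (Ici 0) :=
    (hfd2.continuous.comp_continuousOn hxc).add (hκd2.continuous.comp_continuousOn hxc)
  have hgi : ∀ u v : ℝ, 0 ≤ u → u ≤ v →
      IntervalIntegrable (fun r => deriv f (x r) + deriv κ (x r)) volume u v := by
    intro u v hu huv
    apply ContinuousOn.intervalIntegrable
    apply hgc.mono
    rw [uIcc_of_le huv]
    exact fun r hr => le_trans hu hr.1
  have hExp : ∀ u : ℝ, 0 ≤ u → u ≤ t →
      (∫ r in u..t, (deriv f (x r) + deriv κ (x r))) ≤ -ν * (t - u) := by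
    intro u hu hut
    have h1 : (∫ r in u..t, (deriv f (x r) + deriv κ (x r)))
        ≤ ∫ _ in u..t, (-ν : ℝ) := by
      apply intervalIntegral.integral_mono_on hut (hgi u t hu hut)
        intervalIntegrable_const
      exact fun r _ => hgν r
    rw [intervalIntegral.integral_const, smul_eq_mul] at h1
    linarith
  set N : ℕ := (⌊t / δ⌋).toNat with hN
  have hNt : (N : ℝ) * δ ≤ t := by
    have h1 : ((N : ℤ) : ℝ) ≤ t / δ := by
      rw [hN, Int.toNat_of_nonneg (Int.floor_nonneg.2 (by positivity))]
      exact Int.floor_le _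
    have h2 : (N : ℝ) ≤ t / δ := by exact_mod_cast h1
    calc (N:ℝ) * δ ≤ (t/δ) * δ := mul_le_mul_of_nonneg_right h2 hδ0.le
    _ = t := by field_simp
  -- per-term bound
  have hterm : ∀ i ∈ Finset.range N,
      |∫ s in ((i : ℝ) * δ)..(((i : ℝ) + 1) * δ),
          deriv κ (x ((i : ℝ) * δ)) * f (x ((i : ℝ) * δ)) *
            ∫ u in s..(((i : ℝ) + 1) * δ),
              (-(deriv f (x u) + deriv κ (x u)) *
                Real.exp (∫ r in u..t, (deriv f (x r) + deriv κ (x r))))|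
        ≤ Lκ * Mf * M * δ ^ 2 * Real.exp (-ν * (t - ((i:ℝ)+1)*δ)) := by
    intro i hi
    rw [Finset.mem_range] at hi
    set a : ℝ := (i : ℝ) * δ with hadef
    set b : ℝ := ((i : ℝ) + 1) * δ with hbdef
    have ha0 : 0 ≤ a := by positivity
    have hab : a ≤ b := by rw [hadef, hbdef]; nlinarith
    have hbt : b ≤ t := by
      have h1 : ((i:ℝ) + 1) ≤ (N : ℝ) := by exact_mod_cast Nat.succ_le_of_lt hi
      calc b = ((i:ℝ)+1) * δ := hbdef
      _ ≤ (N:ℝ) * δ := mul_le_mul_of_nonneg_right h1 hδ0.le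
      _ ≤ t := hNt
    have hEbd : 0 ≤ M * Real.exp (-ν * (t - b)) * δ := by positivity
    have key : ‖∫ s in a..b,
        deriv κ (x a) * f (x a) *
          ∫ u in s..b, (-(deriv f (x u) + deriv κ (x u)) *
            Real.exp (∫ r in u..t, (deriv f (x r) + deriv κ (x r))))‖
        ≤ (Lκ * Mf * (M * Real.exp (-ν * (t - b)) * δ)) * |b - a| := by
      apply intervalIntegral.norm_integral_le_of_norm_le_const
      intro s hs
      rw [uIoc_of_le hab] at hs
      have hinner : ‖∫ u in s..b, (-(deriv f (x u) + deriv κ (x u)) *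
            Real.exp (∫ r in u..t, (deriv f (x r) + deriv κ (x r))))‖
          ≤ (M * Real.exp (-ν * (t - b))) * |b - s| := by
        apply intervalIntegral.norm_integral_le_of_norm_le_const
        intro u hu
        rw [uIoc_of_le hs.2] at hu
        have hu0 : 0 ≤ u := le_trans ha0 (le_trans hs.1.le hu.1.le)
        have hub : u ≤ b := hu.2
        have hut : u ≤ t := le_trans hub hbt
        have hexp1 : Real.exp (∫ r in u..t, (deriv f (x r) + deriv κ (x r)))
            ≤ Real.exp (-ν * (t - b)) := by
          apply Real.exp_le_exp.2
          refine le_trans (hExp u hu0 hut) ?_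
          nlinarith
        rw [Real.norm_eq_abs, abs_mul, abs_neg, Real.abs_exp]
        exact mul_le_mul (hgM u hu0) hexp1 (Real.exp_nonneg _) hM0.le
      have hbs : |b - s| ≤ δ := by
        rw [abs_of_nonneg (by linarith [hs.2] : (0:ℝ) ≤ b - s)]
        have h1 : a < s := hs.1
        have h2 : b - a = δ := by rw [hadef, hbdef]; ring
        linarith
      have hinner2 : ‖∫ u in s..b, (-(deriv f (x u) + deriv κ (x u)) *
            Real.exp (∫ r in u..t, (deriv f (x r) + deriv κ (x r))))‖
          ≤ M * Real.exp (-ν * (t - b)) * δ := by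
        refine le_trans hinner ?_
        apply mul_le_mul_of_nonneg_left hbs (by positivity)
      rw [Real.norm_eq_abs] at hinner2 ⊢
      rw [abs_mul, abs_mul]
      have hfxa : |f (x a)| ≤ Mf := by
        rw [hMfd]
        exact aux_fbd f ξ μ q hfLip hξ.le hμ.le B (x a) (hxB a ha0)
      exact mul_le_mul (mul_le_mul (hdκ (x a)) hfxa (abs_nonneg _) hLκ.le)
        hinner2 (abs_nonneg _) (by positivity)
    have hba : |b - a| = δ := by
      rw [hadef, hbdef, abs_of_nonneg (by nlinarith : (0:ℝ) ≤ ((i:ℝ)+1)*δ - (i:ℝ)*δ)]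
      ring
    rw [Real.norm_eq_abs, hba] at key
    calc |∫ s in a..b, deriv κ (x a) * f (x a) *
            ∫ u in s..b, (-(deriv f (x u) + deriv κ (x u)) *
              Real.exp (∫ r in u..t, (deriv f (x r) + deriv κ (x r))))|
        ≤ (Lκ * Mf * (M * Real.exp (-ν * (t - b)) * δ)) * δ := key
      _ = Lκ * Mf * M * δ ^ 2 * Real.exp (-ν * (t - b)) := by ring
  -- sum up
  have hsum : |∑ i ∈ Finset.range N,
      ∫ s in ((i : ℝ) * δ)..(((i : ℝ) + 1) * δ),
        deriv κ (x ((i : ℝ) * δ)) * f (x ((i : ℝ) * δ)) *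
          ∫ u in s..(((i : ℝ) + 1) * δ),
            (-(deriv f (x u) + deriv κ (x u)) *
              Real.exp (∫ r in u..t, (deriv f (x r) + deriv κ (x r))))|
      ≤ C₀ * δ := by
    have hgeom : ∑ i ∈ Finset.range N, Real.exp (-ν * (t - ((i:ℝ)+1)*δ))
        ≤ Real.exp ν / (ν * δ) := by
      have hr1 : (1:ℝ) < Real.exp (ν*δ) := by
        rw [Real.one_lt_exp_iff]; positivity
      have hrw : ∀ i : ℕ, Real.exp (-ν * (t - ((i:ℝ)+1)*δ))
          = Real.exp (-ν * (t - δ)) * Real.exp (ν*δ) ^ i := by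
        intro i
        rw [← Real.exp_nat_mul, ← Real.exp_add]
        ring_nf
      calc ∑ i ∈ Finset.range N, Real.exp (-ν * (t - ((i:ℝ)+1)*δ))
          = Real.exp (-ν * (t - δ)) * ∑ i ∈ Finset.range N, Real.exp (ν*δ) ^ i := by
            rw [Finset.mul_sum]; exact Finset.sum_congr rfl fun i _ => hrw i
        _ = Real.exp (-ν * (t - δ)) * ((Real.exp (ν*δ) ^ N - 1) / (Real.exp (ν*δ) - 1)) := by
            rw [geom_sum_eq hr1.ne']
        _ ≤ Real.exp (-ν * (t - δ)) * (Real.exp (ν*δ) ^ N / (ν * δ)) := by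
            apply mul_le_mul_of_nonneg_left _ (Real.exp_nonneg _)
            apply div_le_div₀ (by positivity)
              (by linarith [pow_nonneg (Real.exp_nonneg (ν*δ)) N]) (by positivity)
            linarith [Real.add_one_le_exp (ν*δ)]
        _ = Real.exp (-ν * (t - δ)) * Real.exp ((N:ℝ) * (ν*δ)) / (ν*δ) := by
            rw [Real.exp_nat_mul]; ring
        _ = Real.exp (-ν * (t - δ) + (N:ℝ)*(ν*δ)) / (ν*δ) := by rw [Real.exp_add]
        _ ≤ Real.exp ν / (ν*δ) := by
            apply div_le_div_of_nonneg_right _ (by positivity)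
            apply Real.exp_le_exp.2
            nlinarith
    calc |∑ i ∈ Finset.range N,
        ∫ s in ((i : ℝ) * δ)..(((i : ℝ) + 1) * δ),
          deriv κ (x ((i : ℝ) * δ)) * f (x ((i : ℝ) * δ)) *
            ∫ u in s..(((i : ℝ) + 1) * δ),
              (-(deriv f (x u) + deriv κ (x u)) *
                Real.exp (∫ r in u..t, (deriv f (x r) + deriv κ (x r))))|
        ≤ ∑ i ∈ Finset.range N,
        |∫ s in ((i : ℝ) * δ)..(((i : ℝ) + 1) * δ),
          deriv κ (x ((i : ℝ) * δ)) * f (x ((i : ℝ) * δ)) *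
            ∫ u in s..(((i : ℝ) + 1) * δ),
              (-(deriv f (x u) + deriv κ (x u)) *
                Real.exp (∫ r in u..t, (deriv f (x r) + deriv κ (x r))))| :=
        Finset.abs_sum_le_sum_abs _ _
      _ ≤ ∑ i ∈ Finset.range N,
          Lκ * Mf * M * δ ^ 2 * Real.exp (-ν * (t - ((i:ℝ)+1)*δ)) :=
        Finset.sum_le_sum hterm
      _ = Lκ * Mf * M * δ ^ 2 * ∑ i ∈ Finset.range N,
          Real.exp (-ν * (t - ((i:ℝ)+1)*δ)) := by rw [Finset.mul_sum]
      _ ≤ Lκ * Mf * M * δ ^ 2 * (Real.exp ν / (ν * δ)) := by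
          apply mul_le_mul_of_nonneg_left hgeom (by positivity)
      _ = (Lκ * Mf * M * Real.exp ν / ν) * δ := by
          field_simp
      _ ≤ C₀ * δ := by
          apply mul_le_mul_of_nonneg_right _ hδ0.le
          rw [hC₀]; linarith
  calc |∑ i ∈ Finset.range N,
      ∫ s in ((i : ℝ) * δ)..(((i : ℝ) + 1) * δ),
        deriv κ (x ((i : ℝ) * δ)) * f (x ((i : ℝ) * δ)) *
          ∫ u in s..(((i : ℝ) + 1) * δ),
            (-(deriv f (x u) + deriv κ (x u)) *
              Real.exp (∫ r in u..t, (deriv f (x r) + deriv κ (x r))))| ^ p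
      ≤ (C₀ * δ) ^ p := pow_le_pow_left₀ (abs_nonneg _) hsum p
    _ = C₀ ^ p * δ ^ p := mul_pow _ _ _
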